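/- Under Assumptions A1 and A2, for each i = 1, …, J one has limsup_{n→∞} (1/n} ln ℙ₀(θ̂ⁿ = θ_i) ≤ −inf_{y ∈ ℝ₊^J} Λ^(i),*(y); equivalently, ℙ₀(θ̂ⁿ = θ_i) ≤ exp{−n·inf_{y ∈ ℝ₊^J} Λ^(i),*(y) − o_sup(n)} where limsup_{n→∞} o_sup(n)/n = 0. -/

import Mathlib

open MeasureTheory ProbabilityTheory Filter
open scoped ENNReal NNReal

/-- The logarithmic moment generating function `Λ^(i)(λ) = ln E₀ exp⟨λ, X^(i)⟩` of the
vector `X^(i) = (ln q(Y;θᵢ) − ln q(Y;θⱼ))_{j ≠ i}` under the true law `ν`, with values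
in the extended reals. -/
noncomputable def logMGF {𝔜 : Type*} [MeasurableSpace 𝔜] {J : ℕ}
    (ν : Measure 𝔜) (q : Fin (J + 1) → 𝔜 → ℝ) (i : Fin (J + 1))
    (lam : {j : Fin (J + 1) // j ≠ i} → ℝ) : EReal :=
  ENNReal.log (∫⁻ y, ENNReal.ofReal
    (Real.exp (∑ j : {j : Fin (J + 1) // j ≠ i},
      lam j * (Real.log (q i y) - Real.log (q j.1 y)))) ∂ν)

/-- The Cramér transform `Λ^(i),*(y) = sup_λ (⟨y, λ⟩ − Λ^(i)(λ))`. -/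
noncomputable def cramerTransform {𝔜 : Type*} [MeasurableSpace 𝔜] {J : ℕ}
    (ν : Measure 𝔜) (q : Fin (J + 1) → 𝔜 → ℝ) (i : Fin (J + 1))
    (y : {j : Fin (J + 1) // j ≠ i} → ℝ) : EReal :=
  ⨆ lam : {j : Fin (J + 1) // j ≠ i} → ℝ,
    (((∑ j : {j : Fin (J + 1) // j ≠ i}, y j * lam j : ℝ) : EReal) - logMGF ν q i lam)

/-- The nonnegative orthant `ℝ₊^J`. -/
def orthant {κ : Type*} : Set (κ → ℝ) := {v | ∀ j, 0 ≤ v j}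



lemma aux_lintegral_pi_pow {𝔜 : Type*} [MeasurableSpace 𝔜] (ν : Measure 𝔜)
    [IsProbabilityMeasure ν] (f : 𝔜 → ℝ≥0∞) (hf : Measurable f) :
    ∀ n : ℕ, ∫⁻ y : Fin n → 𝔜, ∏ k, f (y k) ∂(Measure.pi fun _ => ν) = (∫⁻ x, f x ∂ν) ^ n := by
  intro n
  induction n with
  | zero =>
      simp [Measure.pi_of_empty (fun _ : Fin 0 => ν)]
  | succ n ih =>
      have h := measurePreserving_piFinSuccAbove (fun _ : Fin (n + 1) => ν) 0
      have hg : Measurable fun z : 𝔜 × (Fin n → 𝔜) => f z.1 * ∏ k, f (z.2 k) := by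
        apply (hf.comp measurable_fst).mul
        exact Finset.measurable_prod _ fun k _ => hf.comp ((measurable_pi_apply k).comp measurable_snd)
      calc ∫⁻ y : Fin (n+1) → 𝔜, ∏ k, f (y k) ∂(Measure.pi fun _ => ν)
          = ∫⁻ y : Fin (n+1) → 𝔜,
              (fun z : 𝔜 × (Fin n → 𝔜) => f z.1 * ∏ k, f (z.2 k))
                ((MeasurableEquiv.piFinSuccAbove (fun _ => 𝔜) 0) y)
              ∂(Measure.pi fun _ => ν) := by
            refine lintegral_congr fun y => ?_
            simp [MeasurableEquiv.piFinSuccAbove, Fin.prod_univ_succ, Fin.zero_succAbove, Fin.tail]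
        _ = ∫⁻ z : 𝔜 × (Fin n → 𝔜), f z.1 * ∏ k, f (z.2 k)
              ∂(ν.prod (Measure.pi fun _ : Fin n => ν)) := h.lintegral_comp hg
        _ = (∫⁻ x, f x ∂ν) * ∫⁻ y : Fin n → 𝔜, ∏ k, f (y k) ∂(Measure.pi fun _ => ν) :=
            lintegral_prod_mul hf.aemeasurable
              (Finset.measurable_prod _ fun k _ => hf.comp (measurable_pi_apply k)).aemeasurable
        _ = (∫⁻ x, f x ∂ν) ^ (n + 1) := by rw [ih]; ring

lemma aux_chernoff {𝔜 : Type*} [MeasurableSpace 𝔜] (ν : Measure 𝔜) [IsProbabilityMeasure ν]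
    {κ : Type*} [Fintype κ] (X : 𝔜 → κ → ℝ) (hX : ∀ j, Measurable fun x => X x j)
    (E : (n : ℕ) → Set (Fin n → 𝔜))
    (hE : ∀ n, E n ⊆ {y | (fun j => ∑ k, X (y k) j) ∈ (orthant : Set (κ → ℝ))})
    (lam : κ → ℝ) (hlam : lam ∈ (orthant : Set (κ → ℝ))) :
    Filter.limsup (fun n : ℕ => (((n : ℝ)⁻¹ : ℝ) : EReal) *
      ENNReal.log ((Measure.pi fun _ : Fin n => ν) (E n))) atTop
    ≤ ENNReal.log (∫⁻ x, ENNReal.ofReal (Real.exp (∑ j, lam j * X x j)) ∂ν) := by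
  classical
  set f : 𝔜 → ℝ≥0∞ := fun x => ENNReal.ofReal (Real.exp (∑ j, lam j * X x j)) with hfdef
  have hfm : Measurable f :=
    ENNReal.measurable_ofReal.comp (Real.measurable_exp.comp
      (Finset.measurable_sum _ fun j _ => (hX j).const_mul _))
  set I : ℝ≥0∞ := ∫⁻ x, f x ∂ν with hIdef
  -- the per-n Chernoff bound
  have hbound : ∀ n : ℕ, (Measure.pi fun _ : Fin n => ν) (E n) ≤ I ^ n := by
    intro n
    have hFm : Measurable fun y : Fin n → 𝔜 => ∏ k, f (y k) :=
      Finset.measurable_prod _ fun k _ => hfm.comp (measurable_pi_apply k)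
    have hsub : E n ⊆ {y : Fin n → 𝔜 | 1 ≤ ∏ k, f (y k)} := by
      intro y hy
      have hS := hE n hy
      have h1 : 0 ≤ ∑ k, ∑ j, lam j * X (y k) j := by
        rw [Finset.sum_comm]
        refine Finset.sum_nonneg fun j _ => ?_
        rw [← Finset.mul_sum]
        exact mul_nonneg (hlam j) (hS j)
      show (1:ℝ≥0∞) ≤ ∏ k, f (y k)
      have hprod : (∏ k, f (y k)) = ENNReal.ofReal (Real.exp (∑ k, ∑ j, lam j * X (y k) j)) := by
        rw [Real.exp_sum, ENNReal.ofReal_prod_of_nonneg fun k _ => (Real.exp_pos _).le]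
      rw [hprod]
      calc (1:ℝ≥0∞) = ENNReal.ofReal (Real.exp 0) := by simp
        _ ≤ _ := ENNReal.ofReal_le_ofReal (Real.exp_le_exp.2 h1)
    calc (Measure.pi fun _ : Fin n => ν) (E n)
        ≤ (Measure.pi fun _ : Fin n => ν) {y : Fin n → 𝔜 | 1 ≤ ∏ k, f (y k)} :=
          measure_mono hsub
      _ ≤ ∫⁻ y : Fin n → 𝔜, ∏ k, f (y k) ∂(Measure.pi fun _ => ν) := by
          have := mul_meas_ge_le_lintegral₀ (μ := Measure.pi fun _ : Fin n => ν)
            hFm.aemeasurable 1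
          simpa using this
      _ = I ^ n := aux_lintegral_pi_pow ν f hfm n
  have hterm : ∀ n : ℕ, 1 ≤ n → (((n : ℝ)⁻¹ : ℝ) : EReal) *
      ENNReal.log ((Measure.pi fun _ : Fin n => ν) (E n)) ≤ ENNReal.log I := by
    intro n hn
    have hlog : ENNReal.log ((Measure.pi fun _ : Fin n => ν) (E n))
        ≤ (n : EReal) * ENNReal.log I := by
      refine le_trans (ENNReal.log_monotone (hbound n)) ?_
      rw [ENNReal.log_pow]
    have hnn : (0 : EReal) ≤ (((n : ℝ)⁻¹ : ℝ) : EReal) := by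
      rw [EReal.coe_nonneg]
      positivity
    refine le_trans (mul_le_mul_of_nonneg_left hlog hnn) ?_
    rw [← mul_assoc]
    have hn0 : ((n : ℝ)) ≠ 0 := by positivity
    have hone : (((n : ℝ)⁻¹ : ℝ) : EReal) * (n : EReal) = 1 := by
      rw [show ((n : ℕ) : EReal) = (((n : ℝ)) : EReal) by exact_mod_cast rfl, ← EReal.coe_mul]
      rw [inv_mul_cancel₀ hn0]
      rfl
    rw [hone, one_mul]
  refine limsup_le_of_le (by isBoundedDefault) ?_
  exact eventually_atTop.2 ⟨1, hterm⟩


lemma aux_fenchel {κ : Type*} [Fintype κ]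
    (Λ : (κ → ℝ) → EReal)
    (hepi : Convex ℝ {p : (κ → ℝ) × ℝ | Λ p.1 ≤ (p.2 : EReal)})
    (hbot : ∀ l, Λ l ≠ ⊥)
    {r C : ℝ} (hr : 0 < r) (hball : ∀ l : κ → ℝ, ‖l‖ < r → Λ l ≤ (C : EReal))
    {c : ℝ} (hc : ∀ l ∈ (orthant : Set (κ → ℝ)), (c : EReal) ≤ Λ l) :
    ∃ y ∈ (orthant : Set (κ → ℝ)),
      ∀ l : κ → ℝ, ((∑ j, y j * l j : ℝ) : EReal) - Λ l ≤ ((-c : ℝ) : EReal) := by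
  classical
  set epi := {p : (κ → ℝ) × ℝ | Λ p.1 ≤ (p.2 : EReal)} with hepidef
  have hbox : (Metric.ball (0 : κ → ℝ) r) ×ˢ (Set.Ioi C) ⊆ epi := by
    rintro ⟨l, t⟩ ⟨hl, ht⟩
    refine le_trans (hball l (by simpa using hl)) ?_
    exact_mod_cast le_of_lt ht
  have hbox_int : (Metric.ball (0 : κ → ℝ) r) ×ˢ (Set.Ioi C) ⊆ interior epi :=
    interior_maximal hbox ((Metric.isOpen_ball).prod isOpen_Ioi)
  have hp₀ : (((0 : κ → ℝ), C + 1) : (κ → ℝ) × ℝ) ∈ interior epi := by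
    refine hbox_int ⟨?_, ?_⟩
    · simpa using hr
    · simp
  set B := (orthant : Set (κ → ℝ)) ×ˢ (Set.Iio c) with hBdef
  have hBconv : Convex ℝ B := by
    refine Convex.prod ?_ (convex_Iio c)
    intro x hx y hy a b ha hb _ j
    have := add_nonneg (mul_nonneg ha (hx j)) (mul_nonneg hb (hy j))
    simpa [smul_eq_mul] using this
  have hdisj : Disjoint (interior epi) B := by
    rw [Set.disjoint_left]
    rintro ⟨l, t⟩ hint ⟨hl, ht⟩
    have h2 : ((l, t) : (κ → ℝ) × ℝ) ∈ epi := interior_subset hint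
    have h1 : (c : EReal) ≤ (t : EReal) := le_trans (hc l hl) h2
    exact absurd (EReal.coe_le_coe_iff.1 h1) (not_le.2 ht)
  obtain ⟨f, u, hfA, hfB⟩ :=
    geometric_hahn_banach_open hepi.interior isOpen_interior hBconv hdisj
  -- f ≤ u on all of epi
  have hepi_le : ∀ p ∈ epi, f p ≤ u := by
    intro p hp
    by_contra hgt
    push_neg at hgt
    set d := f (((0 : κ → ℝ), C + 1)) - f p with hd
    have hseg : ∀ t : ℝ, t ∈ Set.Ioc (0:ℝ) 1 → f p + t * d < u := by
      intro t ht
      have hmem := hepi.add_smul_sub_mem_interior hp hp₀ ht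
      have := hfA _ hmem
      simpa [map_add, _root_.map_smul, map_sub, smul_eq_mul, hd, mul_sub] using this
    rcases le_or_gt 0 d with hd0 | hd0
    · have := hseg 1 ⟨zero_lt_one, le_refl 1⟩
      nlinarith
    · set t := min 1 ((f p - u) / 2 / (-d)) with htdef
      have hfu : 0 < f p - u := sub_pos.2 hgt
      have hdpos : 0 < -d := by linarith
      have ht0 : 0 < t := by
        refine lt_min zero_lt_one ?_
        positivity
      have := hseg t ⟨ht0, min_le_left _ _⟩
      have h2 : t * (-d) ≤ (f p - u) / 2 := by
        calc t * (-d) ≤ ((f p - u) / 2 / (-d)) * (-d) :=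
              mul_le_mul_of_nonneg_right (min_le_right _ _) hdpos.le
          _ = (f p - u) / 2 := div_mul_cancel₀ _ hdpos.ne'
      nlinarith
  set a := f ((0 : κ → ℝ), (1:ℝ)) with hadef
  set v := fun j => f ((Pi.single j 1 : κ → ℝ), (0:ℝ)) with hvdef
  have hfdecomp : ∀ (l : κ → ℝ) (t : ℝ), f (l, t) = (∑ j, l j * v j) + t * a := by
    intro l t
    have hrepr : ((l, t) : (κ → ℝ) × ℝ)
        = (∑ j, (l j) • (((Pi.single j 1 : κ → ℝ), (0:ℝ)) : (κ → ℝ) × ℝ))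
          + t • (((0 : κ → ℝ), (1:ℝ)) : (κ → ℝ) × ℝ) := by
      refine Prod.ext ?_ ?_
      · simp only [Prod.fst_add, Prod.fst_sum, Prod.smul_fst, Prod.snd_add, smul_zero, add_zero]
        funext x
        simp [Pi.single_apply, smul_eq_mul, mul_ite, Finset.sum_ite_eq']
      · simp [Prod.snd_add, Prod.snd_sum, Prod.smul_snd]
    rw [hrepr, map_add, map_sum]
    simp only [_root_.map_smul, smul_eq_mul]
    rfl
  have hΛ0 : Λ 0 ≤ (C : EReal) := hball 0 (by simpa using hr)
  have ha_le : a ≤ 0 := by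
    by_contra hpos
    push_neg at hpos
    set t := max C ((u + 1) / a) with htdef
    have hmem : ((0 : κ → ℝ), t) ∈ epi := by
      refine le_trans hΛ0 ?_
      exact_mod_cast le_max_left _ _
    have hle := hepi_le _ hmem
    rw [hfdecomp] at hle
    simp only [Pi.zero_apply, zero_mul, Finset.sum_const_zero, zero_add] at hle
    have h1 : u + 1 ≤ t * a := (div_le_iff₀ hpos).1 (le_max_right _ _)
    linarith
  have hu_le : ∀ s : ℝ, s < c → u ≤ s * a := by
    intro s hs
    have hmem : ((0 : κ → ℝ), s) ∈ B := ⟨fun j => le_refl 0, hs⟩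
    have := hfB _ hmem
    rw [hfdecomp] at this
    simpa using this
  have hv : ∀ j, 0 ≤ v j := by
    intro j
    by_contra hneg
    push_neg at hneg
    have huc : u ≤ (c - 1) * a := hu_le (c - 1) (by linarith)
    set T := ((c - 1) * a - u + 1) / (-v j) with hTdef
    have hT : 0 ≤ T := div_nonneg (by linarith) (by linarith)
    have hmem : ((T • (Pi.single j 1 : κ → ℝ)), c - 1) ∈ B := by
      refine ⟨fun k => ?_, by norm_num⟩
      simp only [Pi.smul_apply, Pi.single_apply, smul_eq_mul]
      by_cases h : k = j <;> simp [h, hT]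
    have hge := hfB _ hmem
    rw [hfdecomp] at hge
    have hsum : (∑ k, (T • (Pi.single j 1 : κ → ℝ)) k * v k) = T * v j := by
      simp only [Pi.smul_apply, Pi.single_apply, smul_eq_mul, ite_mul, mul_ite, mul_one,
        mul_zero, zero_mul]
      simp [Finset.sum_ite_eq]
    rw [hsum] at hge
    have hTv : T * (-v j) = (c - 1) * a - u + 1 :=
      div_mul_cancel₀ _ (by linarith : -v j ≠ 0)
    nlinarith
  have ha : a < 0 := by
    rcases lt_or_eq_of_le ha_le with h | h
    · exact h
    · exfalso
      have hu0 : u ≤ 0 := by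
        have := hu_le (c - 1) (by linarith)
        rw [h] at this
        simpa using this
      set l := (fun _ => r / 2 : κ → ℝ) with hldef
      have hlnorm : ‖l‖ < r := by
        have : ‖l‖ ≤ r / 2 := by
          refine (pi_norm_le_iff_of_nonneg (by linarith)).2 fun j => ?_
          simp only [hldef, Real.norm_eq_abs]
          rw [abs_of_nonneg (by linarith : (0:ℝ) ≤ r / 2)]
        linarith
      have hmem : (l, C + 1) ∈ interior epi := by
        refine hbox_int ⟨?_, by simp⟩
        simpa [Metric.mem_ball, dist_zero_right] using hlnorm
      have hlt := hfA _ hmem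
      rw [hfdecomp] at hlt
      rw [h] at hlt
      have hsum0 : 0 ≤ ∑ j, l j * v j :=
        Finset.sum_nonneg fun j _ => mul_nonneg (by simp [hldef]; linarith) (hv j)
      simp only [mul_zero, add_zero] at hlt
      linarith
  have huc : u ≤ c * a := by
    refine le_of_forall_pos_le_add ?_
    intro ε hε
    have hna : (0:ℝ) < -a := by linarith
    have hkey := hu_le (c - ε / (-a)) (by
      have : 0 < ε / (-a) := by positivity
      linarith)
    have hid : (c - ε / (-a)) * a = c * a + ε := by
      field_simp
      rw [mul_sub, mul_neg, mul_div_assoc', mul_div_cancel_left₀ ε ha.ne]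
      ring
    linarith [hkey, hid.le, hid.ge]
  refine ⟨fun j => v j / (-a), fun j => div_nonneg (hv j) (by linarith), ?_⟩
  intro l
  by_cases htop : Λ l = ⊤
  · simp [htop]
  · have hne : Λ l ≠ ⊥ := hbot l
    set w := Λ l with hw
    lift w to ℝ using ⟨htop, hne⟩ with L hL
    have hmem : (l, L) ∈ epi := by
      show Λ l ≤ (L : EReal)
      rw [← hw]
    have hle := hepi_le _ hmem
    rw [hfdecomp] at hle
    have hna : (0:ℝ) < -a := by linarith
    have hsum2 : (∑ j, l j * v j) ≤ (L - c) * (-a) := by nlinarith [hle.trans huc]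
    have hsum3 : (∑ j, (v j / (-a)) * l j) ≤ L - c := by
      have heq : (∑ j, (v j / (-a)) * l j) = (∑ j, l j * v j) / (-a) := by
        rw [Finset.sum_div]
        exact Finset.sum_congr rfl fun j _ => by ring
      rw [heq, div_le_iff₀ hna]
      exact hsum2
    rw [← EReal.coe_sub]
    exact_mod_cast (by linarith : (∑ j, (v j / (-a)) * l j) - L ≤ -c)

lemma aux_log_le_iff {x : ℝ≥0∞} {t : ℝ} :
    ENNReal.log x ≤ (t : EReal) ↔ x ≤ ENNReal.ofReal (Real.exp t) := by
  conv_lhs => rw [show (t : EReal) = ENNReal.log (ENNReal.ofReal (Real.exp t)) by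
    rw [ENNReal.log_ofReal_of_pos (Real.exp_pos t), Real.log_exp]]
  exact ENNReal.log_strictMono.le_iff_le

lemma aux_amgm {κ : Type*} [Fintype κ] {s : ℝ} (hs : 0 < s) (lam : κ → ℝ)
    (hsum : ∑ j, |lam j| / s ≤ 1) (w : κ → ℝ) :
    Real.exp (∑ j, lam j * w j)
      ≤ 1 + ∑ j, (Real.exp (s * w j) + Real.exp (-(s * w j))) := by
  classical
  set t : κ → ℝ := fun j => |lam j| / s with htdef
  have ht0 : ∀ j, 0 ≤ t j := fun j => div_nonneg (abs_nonneg _) hs.le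
  have htle : ∀ j, t j ≤ 1 := fun j =>
    le_trans (Finset.single_le_sum (fun k _ => ht0 k) (Finset.mem_univ j)) hsum
  set σ : κ → ℝ := fun j => if 0 ≤ lam j then s else -s with hσdef
  set z : κ → ℝ := fun j => Real.exp (σ j * w j) with hzdef
  have hz0 : ∀ j, 0 ≤ z j := fun j => (Real.exp_pos _).le
  have hσt : ∀ j, σ j * t j = lam j := by
    intro j
    by_cases h : 0 ≤ lam j
    · simp only [σ, t, if_pos h]
      rw [abs_of_nonneg h]
      field_simp
    · simp only [σ, t, if_neg h]
      rw [abs_of_neg (not_le.1 h)]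
      field_simp
  have hexp : Real.exp (∑ j, lam j * w j) = ∏ j, z j ^ t j := by
    rw [Real.exp_sum]
    refine Finset.prod_congr rfl fun j _ => ?_
    rw [hzdef]
    rw [← Real.exp_mul]
    congr 1
    rw [show σ j * w j * t j = (σ j * t j) * w j by ring, hσt j]
  set W : Option κ → ℝ := fun o => o.elim (1 - ∑ j, t j) t with hWdef
  set Z : Option κ → ℝ := fun o => o.elim 1 z with hZdef
  have hW0 : ∀ o ∈ Finset.univ, 0 ≤ W o := by
    rintro (_ | j) _
    · simp only [W, Option.elim]
      have : ∑ j, t j ≤ 1 := hsum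
      linarith
    · exact ht0 j
  have hWsum : ∑ o, W o = 1 := by
    rw [Fintype.sum_option]
    simp only [W, Option.elim]
    ring
  have hZ0 : ∀ o ∈ Finset.univ, 0 ≤ Z o := by
    rintro (_ | j) _
    · exact zero_le_one
    · exact hz0 j
  have hgm := Real.geom_mean_le_arith_mean_weighted Finset.univ W Z hW0 hWsum hZ0
  rw [Fintype.prod_option, Fintype.sum_option] at hgm
  simp only [W, Z, Option.elim, Real.one_rpow, one_mul, mul_one] at hgm
  rw [hexp]
  have hle1 : (1 - ∑ j, t j) ≤ 1 := by
    have : 0 ≤ ∑ j, t j := Finset.sum_nonneg fun j _ => ht0 j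
    linarith
  have hbound : ∀ j, t j * z j ≤ Real.exp (s * w j) + Real.exp (-(s * w j)) := by
    intro j
    have hzb : z j ≤ Real.exp (s * w j) + Real.exp (-(s * w j)) := by
      simp only [z, σ]
      by_cases h : 0 ≤ lam j
      · rw [if_pos h]
        linarith [(Real.exp_pos (-(s * w j))).le]
      · rw [if_neg h, show -s * w j = -(s * w j) by ring]
        linarith [(Real.exp_pos (s * w j)).le]
    calc t j * z j ≤ 1 * z j := mul_le_mul_of_nonneg_right (htle j) (hz0 j)
      _ ≤ _ := by rw [one_mul]; exact hzb
  calc (∏ j, z j ^ t j) ≤ (1 - ∑ j, t j) + ∑ j, t j * z j := hgm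
    _ ≤ 1 + ∑ j, (Real.exp (s * w j) + Real.exp (-(s * w j))) := by
        refine add_le_add hle1 (Finset.sum_le_sum fun j _ => hbound j)

lemma aux_epi_convex {𝔜 : Type*} [MeasurableSpace 𝔜] (ν : Measure 𝔜) {κ : Type*} [Fintype κ]
    (X : 𝔜 → κ → ℝ) (hX : ∀ j, Measurable fun x => X x j) :
    Convex ℝ {p : (κ → ℝ) × ℝ |
      ENNReal.log (∫⁻ x, ENNReal.ofReal (Real.exp (∑ j, p.1 j * X x j)) ∂ν) ≤ (p.2 : EReal)} := by
  intro p hp q hq a b ha hb hab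
  rcases ha.eq_or_lt with rfl | ha'
  · have hb1 : b = 1 := by linarith
    simpa [hb1] using hq
  rcases hb.eq_or_lt with rfl | hb'
  · have ha1 : a = 1 := by linarith
    simpa [ha1] using hp
  have ha1 : a < 1 := by linarith
  set g1 : 𝔜 → ℝ := fun x => ∑ j, p.1 j * X x j with hg1def
  set g2 : 𝔜 → ℝ := fun x => ∑ j, q.1 j * X x j with hg2def
  have hg1 : Measurable g1 := Finset.measurable_sum _ fun j _ => (hX j).const_mul _
  have hg2 : Measurable g2 := Finset.measurable_sum _ fun j _ => (hX j).const_mul _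
  show ENNReal.log (∫⁻ x, ENNReal.ofReal
      (Real.exp (∑ j, (a • p + b • q).1 j * X x j)) ∂ν) ≤ (((a • p + b • q).2 : ℝ) : EReal)
  have hcoord : ∀ x, (∑ j, (a • p + b • q).1 j * X x j) = a * g1 x + b * g2 x := by
    intro x
    simp only [Prod.fst_add, Prod.smul_fst, Pi.add_apply, Pi.smul_apply, smul_eq_mul,
      hg1def, hg2def, Finset.mul_sum]
    rw [← Finset.sum_add_distrib]
    exact Finset.sum_congr rfl fun j _ => by ring
  have hsnd : (a • p + b • q).2 = a * p.2 + b * q.2 := rfl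
  set f : 𝔜 → ℝ≥0∞ := fun x => ENNReal.ofReal (Real.exp (a * g1 x)) with hfdef
  set g : 𝔜 → ℝ≥0∞ := fun x => ENNReal.ofReal (Real.exp (b * g2 x)) with hgdef
  have hconj : Real.HolderConjugate (1/a) (1/b) := by
    refine Real.holderConjugate_iff.mpr ⟨?_, ?_⟩
    · rw [lt_div_iff₀ ha']; linarith
    · simp only [one_div, inv_inv]; linarith
  have hfm : Measurable f :=
    ENNReal.measurable_ofReal.comp (Real.measurable_exp.comp (hg1.const_mul a))
  have hgm2 : Measurable g :=
    ENNReal.measurable_ofReal.comp (Real.measurable_exp.comp (hg2.const_mul b))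
  have hholder := ENNReal.lintegral_mul_le_Lp_mul_Lq ν hconj hfm.aemeasurable hgm2.aemeasurable
  have hfg : ∀ x, (f * g) x = ENNReal.ofReal (Real.exp (a * g1 x + b * g2 x)) := by
    intro x
    simp only [Pi.mul_apply, hfdef, hgdef]
    rw [← ENNReal.ofReal_mul (Real.exp_pos _).le, ← Real.exp_add]
  have hfp : ∀ x, f x ^ (1/a) = ENNReal.ofReal (Real.exp (g1 x)) := by
    intro x
    rw [hfdef, ENNReal.ofReal_rpow_of_pos (Real.exp_pos _), ← Real.exp_mul,
      show a * g1 x * (1/a) = g1 x by field_simp]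
  have hgq : ∀ x, g x ^ (1/b) = ENNReal.ofReal (Real.exp (g2 x)) := by
    intro x
    rw [hgdef, ENNReal.ofReal_rpow_of_pos (Real.exp_pos _), ← Real.exp_mul,
      show b * g2 x * (1/b) = g2 x by field_simp]
  have h1a : (1 : ℝ)/(1/a) = a := one_div_one_div a
  have h1b : (1 : ℝ)/(1/b) = b := one_div_one_div b
  simp only [hfg, hfp, hgq, h1a, h1b] at hholder
  -- use memberships
  rw [Set.mem_setOf_eq] at hp hq
  rw [aux_log_le_iff] at hp hq ⊢
  calc ∫⁻ x, ENNReal.ofReal (Real.exp (∑ j, (a • p + b • q).1 j * X x j)) ∂ν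
      = ∫⁻ x, ENNReal.ofReal (Real.exp (a * g1 x + b * g2 x)) ∂ν := by
        refine lintegral_congr fun x => by rw [hcoord x]
    _ ≤ (∫⁻ x, ENNReal.ofReal (Real.exp (g1 x)) ∂ν) ^ a *
        (∫⁻ x, ENNReal.ofReal (Real.exp (g2 x)) ∂ν) ^ b := hholder
    _ ≤ (ENNReal.ofReal (Real.exp p.2)) ^ a * (ENNReal.ofReal (Real.exp q.2)) ^ b :=
        mul_le_mul' (ENNReal.rpow_le_rpow hp ha) (ENNReal.rpow_le_rpow hq hb)
    _ = ENNReal.ofReal (Real.exp ((a • p + b • q).2)) := by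
        rw [ENNReal.ofReal_rpow_of_pos (Real.exp_pos _),
          ENNReal.ofReal_rpow_of_pos (Real.exp_pos _),
          ← ENNReal.ofReal_mul (Real.rpow_nonneg (Real.exp_pos _).le _),
          ← Real.exp_mul, ← Real.exp_mul, ← Real.exp_add, hsnd]
        ring_nf

lemma aux_not_bot {𝔜 : Type*} [MeasurableSpace 𝔜] (ν : Measure 𝔜) [IsProbabilityMeasure ν]
    {κ : Type*} [Fintype κ] (X : 𝔜 → κ → ℝ) (hX : ∀ j, Measurable fun x => X x j)
    (lam : κ → ℝ) :
    ENNReal.log (∫⁻ x, ENNReal.ofReal (Real.exp (∑ j, lam j * X x j)) ∂ν) ≠ ⊥ := by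
  rw [ne_eq, ENNReal.log_eq_bot_iff]
  have hm : Measurable fun x => ENNReal.ofReal (Real.exp (∑ j, lam j * X x j)) :=
    ENNReal.measurable_ofReal.comp (Real.measurable_exp.comp
      (Finset.measurable_sum _ fun j _ => (hX j).const_mul _))
  intro h0
  have hpos : 0 < ∫⁻ x, ENNReal.ofReal (Real.exp (∑ j, lam j * X x j)) ∂ν := by
    rw [lintegral_pos_iff_support hm]
    have : Function.support (fun x => ENNReal.ofReal (Real.exp (∑ j, lam j * X x j)))
        = Set.univ := by
      ext x
      simp [Function.mem_support, ENNReal.ofReal_eq_zero, not_le, Real.exp_pos]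
    rw [this]
    simp
  exact hpos.ne' h0

lemma aux_ball {𝔜 : Type*} [MeasurableSpace 𝔜] (ν : Measure 𝔜) [IsProbabilityMeasure ν]
    {κ : Type*} [Fintype κ] (X : 𝔜 → κ → ℝ) (hX : ∀ j, Measurable fun x => X x j)
    {s : ℝ} (hs : 0 < s)
    (hfin : ∀ j, (∫⁻ x, ENNReal.ofReal (Real.exp (s * X x j)) ∂ν) < ⊤)
    (hfin' : ∀ j, (∫⁻ x, ENNReal.ofReal (Real.exp (-(s * X x j))) ∂ν) < ⊤) :
    ∃ r : ℝ, 0 < r ∧ ∃ C : ℝ, ∀ lam : κ → ℝ, ‖lam‖ < r →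
      ENNReal.log (∫⁻ x, ENNReal.ofReal (Real.exp (∑ j, lam j * X x j)) ∂ν) ≤ (C : EReal) := by
  classical
  set K : ℕ := Fintype.card κ with hK
  refine ⟨s / (K + 1), by positivity, ?_⟩
  set Cen : ℝ≥0∞ := 1 + ∑ j, ((∫⁻ x, ENNReal.ofReal (Real.exp (s * X x j)) ∂ν)
    + (∫⁻ x, ENNReal.ofReal (Real.exp (-(s * X x j))) ∂ν)) with hCen
  have hCenfin : Cen ≠ ⊤ := by
    rw [hCen]
    refine (ENNReal.add_lt_top.2 ⟨ENNReal.one_lt_top, ?_⟩).ne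
    rw [ENNReal.sum_lt_top]
    exact fun j _ => ENNReal.add_lt_top.2 ⟨hfin j, hfin' j⟩
  refine ⟨Real.log (Cen.toReal + 1), ?_⟩
  intro lam hlam
  have hsum : ∑ j, |lam j| / s ≤ 1 := by
    have hjle : ∀ j, |lam j| / s ≤ 1 / (K + 1) := by
      intro j
      have h1 : |lam j| ≤ ‖lam‖ := by
        simpa [Real.norm_eq_abs] using norm_le_pi_norm lam j
      rw [div_le_div_iff₀ hs (by positivity)]
      have h2 : |lam j| * ((K:ℝ) + 1) ≤ s := by
        rw [← le_div_iff₀ (by positivity : (0:ℝ) < (K:ℝ) + 1)]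
        exact h1.trans hlam.le
      linarith
    calc ∑ j, |lam j| / s ≤ ∑ _j : κ, (1:ℝ) / (K + 1) :=
          Finset.sum_le_sum fun j _ => hjle j
      _ = K * (1 / (K + 1)) := by simp [hK, mul_comm]
      _ ≤ 1 := by
          rw [mul_one_div, div_le_one (by positivity)]
          linarith
  have hpoint : ∀ x, ENNReal.ofReal (Real.exp (∑ j, lam j * X x j))
      ≤ ENNReal.ofReal 1 + ∑ j, (ENNReal.ofReal (Real.exp (s * X x j))
        + ENNReal.ofReal (Real.exp (-(s * X x j)))) := by
    intro x
    refine le_trans (ENNReal.ofReal_le_ofReal (aux_amgm hs lam hsum (fun j => X x j))) ?_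
    rw [ENNReal.ofReal_add zero_le_one (Finset.sum_nonneg fun j _ =>
      add_nonneg (Real.exp_pos _).le (Real.exp_pos _).le)]
    refine add_le_add le_rfl ?_
    rw [ENNReal.ofReal_sum_of_nonneg fun j _ => add_nonneg (Real.exp_pos _).le (Real.exp_pos _).le]
    refine Finset.sum_le_sum fun j _ => ?_
    rw [ENNReal.ofReal_add (Real.exp_pos _).le (Real.exp_pos _).le]
  have hint : (∫⁻ x, ENNReal.ofReal (Real.exp (∑ j, lam j * X x j)) ∂ν) ≤ Cen := by
    calc (∫⁻ x, ENNReal.ofReal (Real.exp (∑ j, lam j * X x j)) ∂ν)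
        ≤ ∫⁻ x, (ENNReal.ofReal 1 + ∑ j, (ENNReal.ofReal (Real.exp (s * X x j))
            + ENNReal.ofReal (Real.exp (-(s * X x j))))) ∂ν :=
          lintegral_mono fun x => hpoint x
      _ = Cen := by
          rw [lintegral_add_left (measurable_const)]
          rw [lintegral_finset_sum]
          · simp only [lintegral_const, measure_univ, mul_one, ENNReal.ofReal_one, hCen]
            congr 1
            refine Finset.sum_congr rfl fun j _ => ?_
            rw [lintegral_add_left]
            exact ENNReal.measurable_ofReal.comp (Real.measurable_exp.comp ((hX j).const_mul s))
          · intro j _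
            refine Measurable.add (M := ℝ≥0∞) ?_ ?_
            · exact ENNReal.measurable_ofReal.comp (Real.measurable_exp.comp ((hX j).const_mul s))
            · exact ENNReal.measurable_ofReal.comp (Real.measurable_exp.comp
                (((hX j).const_mul s).neg))
  rw [aux_log_le_iff]
  refine hint.trans ?_
  rw [Real.exp_log (by positivity : (0:ℝ) < Cen.toReal + 1)]
  calc Cen = ENNReal.ofReal Cen.toReal := (ENNReal.ofReal_toReal hCenfin).symm
    _ ≤ ENNReal.ofReal (Cen.toReal + 1) := ENNReal.ofReal_le_ofReal (by linarith)
/-- **Large deviations upper bound for the m-estimator** (Proposition 2(ii)).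
Under Assumptions A1 and A2, for each `i ≠ 0`,
`limsup (1/n) ln ℙ₀(θ̂ⁿ = θᵢ) ≤ − inf_{y ∈ ℝ₊^J} Λ^(i),*(y)`. -/
theorem upper_bound_prob_m_estimator
    {𝔜 : Type*} [MeasurableSpace 𝔜] {J : ℕ}
    (ν : Measure 𝔜) [IsProbabilityMeasure ν]
    (q : Fin (J + 1) → 𝔜 → ℝ)
    (hq_meas : ∀ θ, Measurable (q θ))
    (hq_pos : ∀ θ y, 0 < q θ y)
    (hq_int : ∀ θ, Integrable (fun y => Real.log (q θ y)) ν)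
    (hq_ident : ∀ θ, θ ≠ 0 → ∫ y, Real.log (q θ y) ∂ν < ∫ y, Real.log (q 0 y) ∂ν)
    -- A2: finiteness of the moment generating functions of the log likelihood ratios
    -- in a neighborhood of zero
    (hA2 : ∃ δ : ℝ, 0 < δ ∧ ∀ η ∈ Set.Ioo (-δ) δ, ∀ j k : Fin (J + 1),
      (∫⁻ y, ENNReal.ofReal ((q j y / q k y) ^ η) ∂ν) < ⊤)
    -- the m-estimator: est n maximizes Qₙ over the parameter space
    (est : (n : ℕ) → (Fin n → 𝔜) → Fin (J + 1))
    (hest_meas : ∀ n, Measurable (est n))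
    (hest_max : ∀ n (y : Fin n → 𝔜) (θ : Fin (J + 1)),
      ∑ k, Real.log (q θ (y k)) ≤ ∑ k, Real.log (q (est n y) (y k)))
    (i : Fin (J + 1)) (hi : i ≠ 0)
    -- the event {θ̂ⁿ = θᵢ} equals {∑ₖ X_k^(i) ∈ int ℝ₊^J}
    (hest_event : ∀ n, {y : Fin n → 𝔜 | est n y = i} =
      {y : Fin n → 𝔜 | (fun j : {j : Fin (J + 1) // j ≠ i} =>
          ∑ k, (Real.log (q i (y k)) - Real.log (q j.1 (y k)))) ∈ interior orthant}) :
    Filter.limsup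
      (fun n : ℕ => (((n : ℝ)⁻¹ : ℝ) : EReal) *
        ENNReal.log ((Measure.pi fun _ : Fin n => ν) {y | est n y = i}))
      atTop
    ≤ -(⨅ y ∈ (orthant : Set ({j : Fin (J + 1) // j ≠ i} → ℝ)),
        cramerTransform ν q i y) := by

  classical
  set X : 𝔜 → {j : Fin (J + 1) // j ≠ i} → ℝ :=
    fun x j => Real.log (q i x) - Real.log (q j.1 x) with hXdef
  have hX : ∀ j : {j : Fin (J + 1) // j ≠ i}, Measurable fun x => X x j :=
    fun j => ((hq_meas i).log).sub ((hq_meas j.1).log)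
  have hlogMGF : ∀ lam, logMGF ν q i lam
      = ENNReal.log (∫⁻ x, ENNReal.ofReal (Real.exp (∑ j, lam j * X x j)) ∂ν) :=
    fun lam => rfl
  have hstep1 : ∀ lam ∈ (orthant : Set ({j : Fin (J + 1) // j ≠ i} → ℝ)),
      Filter.limsup
        (fun n : ℕ => (((n : ℝ)⁻¹ : ℝ) : EReal) *
          ENNReal.log ((Measure.pi fun _ : Fin n => ν) {y | est n y = i}))
        atTop
      ≤ logMGF ν q i lam := by
    intro lam hlam
    rw [hlogMGF]
    refine aux_chernoff ν X hX (fun n => {y | est n y = i}) ?_ lam hlam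
    intro n
    show {y : Fin n → 𝔜 | est n y = i} ⊆
      {y : Fin n → 𝔜 | (fun j => ∑ k, X (y k) j) ∈ (orthant : Set _)}
    rw [hest_event n]
    intro y hy
    have hy' : (fun j => ∑ k, X (y k) j)
        ∈ interior (orthant : Set ({j : Fin (J + 1) // j ≠ i} → ℝ)) := hy
    show (fun j => ∑ k, X (y k) j) ∈ (orthant : Set ({j : Fin (J + 1) // j ≠ i} → ℝ))
    exact interior_subset hy'
  refine le_trans (le_iInf₂ hstep1 :
    _ ≤ ⨅ lam ∈ (orthant : Set ({j : Fin (J + 1) // j ≠ i} → ℝ)), logMGF ν q i lam) ?_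
  set M := ⨅ lam ∈ (orthant : Set ({j : Fin (J + 1) // j ≠ i} → ℝ)), logMGF ν q i lam
    with hMdef
  by_cases hMbot : M = ⊥
  · rw [hMbot]; exact bot_le
  have hzero_mem : (0 : {j : Fin (J + 1) // j ≠ i} → ℝ) ∈ orthant := fun j => le_rfl
  have hL0 : logMGF ν q i 0 = 0 := by
    simp [logMGF]
  have hM0 : M ≤ 0 := by
    refine le_trans (iInf₂_le (0 : {j : Fin (J + 1) // j ≠ i} → ℝ) hzero_mem) ?_
    rw [hL0]
  have hMtop : M ≠ ⊤ := by
    intro h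
    rw [h] at hM0
    exact absurd hM0 (by simp)
  have hc : ((M.toReal : ℝ) : EReal) = M := EReal.coe_toReal hMtop hMbot
  set c := M.toReal with hcdef
  have hcle : ∀ lam ∈ (orthant : Set ({j : Fin (J + 1) // j ≠ i} → ℝ)),
      (c : EReal) ≤ logMGF ν q i lam := by
    intro lam hlam
    exact hc.le.trans (iInf₂_le lam hlam)
  have hepi : Convex ℝ {p : ({j : Fin (J + 1) // j ≠ i} → ℝ) × ℝ |
      logMGF ν q i p.1 ≤ (p.2 : EReal)} := by
    have h := aux_epi_convex ν X hX
    exact h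
  have hbot : ∀ lam, logMGF ν q i lam ≠ ⊥ := fun lam => aux_not_bot ν X hX lam
  obtain ⟨δ, hδ, h2⟩ := hA2
  have hs : 0 < δ / 2 := by positivity
  have hsmem : δ / 2 ∈ Set.Ioo (-δ) δ := ⟨by linarith, by linarith⟩
  have hfin : ∀ j : {j : Fin (J + 1) // j ≠ i},
      (∫⁻ x, ENNReal.ofReal (Real.exp (δ / 2 * X x j)) ∂ν) < ⊤ := by
    intro j
    have heq : (∫⁻ x, ENNReal.ofReal (Real.exp (δ / 2 * X x j)) ∂ν)
        = ∫⁻ x, ENNReal.ofReal ((q i x / q j.1 x) ^ (δ / 2)) ∂ν := by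
      refine lintegral_congr fun x => ?_
      simp only [hXdef]
      rw [← Real.log_div (hq_pos i x).ne' (hq_pos j.1 x).ne',
        Real.rpow_def_of_pos (div_pos (hq_pos i x) (hq_pos j.1 x)), mul_comm]
    rw [heq]
    exact h2 (δ / 2) hsmem i j.1
  have hfin' : ∀ j : {j : Fin (J + 1) // j ≠ i},
      (∫⁻ x, ENNReal.ofReal (Real.exp (-(δ / 2 * X x j))) ∂ν) < ⊤ := by
    intro j
    have heq : (∫⁻ x, ENNReal.ofReal (Real.exp (-(δ / 2 * X x j))) ∂ν)
        = ∫⁻ x, ENNReal.ofReal ((q j.1 x / q i x) ^ (δ / 2)) ∂ν := by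
      refine lintegral_congr fun x => ?_
      have hswap : -(δ / 2 * X x j) = δ / 2 * (Real.log (q j.1 x) - Real.log (q i x)) := by
        simp only [hXdef]
        ring
      rw [hswap, ← Real.log_div (hq_pos j.1 x).ne' (hq_pos i x).ne',
        Real.rpow_def_of_pos (div_pos (hq_pos j.1 x) (hq_pos i x)), mul_comm]
    rw [heq]
    exact h2 (δ / 2) hsmem j.1 i
  obtain ⟨r, hr, C, hball⟩ := aux_ball ν X hX hs hfin hfin'
  have hball' : ∀ lam : {j : Fin (J + 1) // j ≠ i} → ℝ, ‖lam‖ < r →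
      logMGF ν q i lam ≤ (C : EReal) := by
    intro lam h
    rw [hlogMGF]
    exact hball lam h
  obtain ⟨y, hy, hmin⟩ := aux_fenchel (logMGF ν q i) hepi hbot hr hball' hcle
  have hcr : cramerTransform ν q i y ≤ ((-c : ℝ) : EReal) := iSup_le fun lam => hmin lam
  have hinf : (⨅ z ∈ (orthant : Set ({j : Fin (J + 1) // j ≠ i} → ℝ)),
      cramerTransform ν q i z) ≤ ((-c : ℝ) : EReal) := iInf₂_le_of_le y hy hcr
  calc M = ((c : ℝ) : EReal) := hc.symm
    _ = -(((-c : ℝ) : ℝ) : EReal) := by rw [EReal.coe_neg, neg_neg]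
    _ ≤ -(⨅ z ∈ (orthant : Set ({j : Fin (J + 1) // j ≠ i} → ℝ)),
          cramerTransform ν q i z) := EReal.neg_le_neg_iff.2 hinf
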